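/- arXiv:1910.03647 — 4 statements merged into one kernel-verified Lean document; each statement's English description precedes it below -/
import Mathlib

section
/- Let G be a finite group with a normal abelian subgroup N such that G/N is cyclic. Then the commutator subgroup [G,G] is contained in N and equals the set {ρ(τ)·τ⁻¹ : τ ∈ N}, where ρ is the automorphism of N induced by conjugation by any lift of a generator of G/N. -/
/-- Let `G` be a finite group with a normal abelian subgroup `N` such that `G/N` is cyclic,
generated by the class of `g`. Then `[G,G] ⊆ N` and `[G,G] = {ρ(τ)τ⁻¹ : τ ∈ N}` where
`ρ` is conjugation by `g`. -/
theorem stmt0 {G : Type*} [Group G] [Finite G] (N : Subgroup G) (hN : N.Normal)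
    (habelian : ∀ a b : G, a ∈ N → b ∈ N → a * b = b * a)
    (g : G)
    (hgen : ∀ x : G ⧸ N, x ∈ Subgroup.zpowers (QuotientGroup.mk g : G ⧸ N)) :
    commutator G ≤ N ∧
      (commutator G : Set G) = {x : G | ∃ τ ∈ N, x = (g * τ * g⁻¹) * τ⁻¹} := by
  have hconj : ∀ τ ∈ N, g * τ * g⁻¹ ∈ N := fun τ hτ => hN.conj_mem τ hτ g
  have hmem : ∀ τ ∈ N, (g * τ * g⁻¹) * τ⁻¹ ∈ N := fun τ hτ =>
    N.mul_mem (hconj τ hτ) (N.inv_mem hτ)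
  have hmul : ∀ σ ∈ N, ∀ τ ∈ N,
      ((g * σ * g⁻¹) * σ⁻¹) * ((g * τ * g⁻¹) * τ⁻¹) = (g * (σ * τ) * g⁻¹) * (σ * τ)⁻¹ := by
    intro σ hσ τ hτ
    have h1 : σ⁻¹ * (g * τ * g⁻¹) = (g * τ * g⁻¹) * σ⁻¹ :=
      habelian _ _ (N.inv_mem hσ) (hconj τ hτ)
    have h2 : σ⁻¹ * τ⁻¹ = τ⁻¹ * σ⁻¹ := habelian _ _ (N.inv_mem hσ) (N.inv_mem hτ)
    calc ((g * σ * g⁻¹) * σ⁻¹) * ((g * τ * g⁻¹) * τ⁻¹)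
        = (g * σ * g⁻¹) * (σ⁻¹ * (g * τ * g⁻¹)) * τ⁻¹ := by group
      _ = (g * σ * g⁻¹) * ((g * τ * g⁻¹) * σ⁻¹) * τ⁻¹ := by rw [h1]
      _ = (g * (σ * τ) * g⁻¹) * (σ⁻¹ * τ⁻¹) := by group
      _ = (g * (σ * τ) * g⁻¹) * (τ⁻¹ * σ⁻¹) := by rw [h2]
      _ = (g * (σ * τ) * g⁻¹) * (σ * τ)⁻¹ := by group
  let S : Subgroup G :=
    { carrier := {x : G | ∃ τ ∈ N, x = (g * τ * g⁻¹) * τ⁻¹}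
      one_mem' := ⟨1, N.one_mem, by group⟩
      mul_mem' := by
        rintro a b ⟨σ, hσ, rfl⟩ ⟨τ, hτ, rfl⟩
        exact ⟨σ * τ, N.mul_mem hσ hτ, hmul σ hσ τ hτ⟩
      inv_mem' := by
        rintro a ⟨τ, hτ, rfl⟩
        refine ⟨τ⁻¹, N.inv_mem hτ, ?_⟩
        have h := hmul τ hτ τ⁻¹ (N.inv_mem hτ)
        simp only [mul_inv_cancel] at h
        refine inv_eq_of_mul_eq_one_right ?_
        rw [h]; group }
  have hSmem : ∀ x : G, x ∈ S ↔ ∃ τ ∈ N, x = (g * τ * g⁻¹) * τ⁻¹ := fun x => Iff.rfl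
  have hSleN : S ≤ N := by rintro x ⟨τ, hτ, rfl⟩; exact hmem τ hτ
  -- decomposition of arbitrary elements
  have decomp : ∀ x : G, ∃ k : ℤ, ∃ σ ∈ N, x = g ^ k * σ := by
    intro x
    obtain ⟨k, hk⟩ := hgen (QuotientGroup.mk x)
    refine ⟨k, (g ^ k)⁻¹ * x, ?_, by group⟩
    have hk' : (QuotientGroup.mk (g ^ k) : G ⧸ N) = QuotientGroup.mk x := by
      simpa using hk
    exact QuotientGroup.eq.mp hk'
  -- conjugation stability
  have hconjS : ∀ s ∈ S, g * s * g⁻¹ ∈ S := by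
    rintro s ⟨τ, hτ, rfl⟩
    exact ⟨g * τ * g⁻¹, hconj τ hτ, by group⟩
  have hconjS' : ∀ s ∈ S, g⁻¹ * s * g ∈ S := by
    rintro s ⟨τ, hτ, rfl⟩
    refine ⟨g⁻¹ * τ * g, ?_, by group⟩
    have := hN.conj_mem τ hτ g⁻¹
    simpa using this
  have hzS : ∀ k : ℤ, ∀ s ∈ S, g ^ k * s * g ^ (-k) ∈ S := by
    intro k
    induction k using Int.induction_on with
    | zero => intro s hs; simpa using hs
    | succ k ih =>
      intro s hs
      have h : g ^ ((k : ℤ) + 1) * s * g ^ (-((k : ℤ) + 1)) =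
          g * (g ^ (k : ℤ) * s * g ^ (-(k : ℤ))) * g⁻¹ := by group
      rw [h]; exact hconjS _ (ih s hs)
    | pred k ih =>
      intro s hs
      have h : g ^ (-(k : ℤ) - 1) * s * g ^ (-(-(k : ℤ) - 1)) =
          g⁻¹ * (g ^ (-(k : ℤ)) * s * g ^ (-(-(k : ℤ)))) * g := by group
      rw [h]; exact hconjS' _ (ih s hs)
  have hSnormal : S.Normal := by
    constructor
    intro s hs x
    obtain ⟨k, σ, hσ, rfl⟩ := decomp x
    have hcs : σ * s * σ⁻¹ = s := by
      have := habelian σ s hσ (hSleN hs)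
      rw [this]; group
    have h : (g ^ k * σ) * s * (g ^ k * σ)⁻¹ = g ^ k * (σ * s * σ⁻¹) * g ^ (-k) := by group
    rw [h, hcs]
    exact hzS k s hs
  letI := hSnormal
  set q : G →* G ⧸ S := QuotientGroup.mk' S with hq
  have hcomm_gN : ∀ σ ∈ N, Commute (q g) (q σ) := by
    intro σ hσ
    rw [← commutatorElement_eq_one_iff_commute, ← map_commutatorElement]
    exact (QuotientGroup.eq_one_iff _).mpr ⟨σ, hσ, by group⟩
  have hcomm_NN : ∀ σ ∈ N, ∀ τ ∈ N, Commute (q σ) (q τ) := by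
    intro σ hσ τ hτ
    unfold Commute SemiconjBy
    rw [← map_mul, ← map_mul, habelian σ τ hσ hτ]
  have hle : commutator G ≤ S := by
    rw [commutator_def, Subgroup.commutator_le]
    intro a _ b _
    obtain ⟨i, σ, hσ, rfl⟩ := decomp a
    obtain ⟨j, τ, hτ, rfl⟩ := decomp b
    have key : Commute (q (g ^ i * σ)) (q (g ^ j * τ)) := by
      rw [map_mul, map_mul, map_zpow, map_zpow]
      have c1 : Commute (q g) (q τ) := hcomm_gN τ hτ
      have c2 : Commute (q σ) (q τ) := hcomm_NN σ hσ τ hτ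
      have c3 : Commute (q σ) (q g) := (hcomm_gN σ hσ).symm
      exact (((Commute.refl (q g)).zpow_zpow i j).mul_left (c3.zpow_right j)).mul_right
        ((c1.zpow_left i).mul_left c2)
    open scoped commutatorElement in
    have h1 : q ⁅g ^ i * σ, g ^ j * τ⁆ = 1 := by
      rw [map_commutatorElement, commutatorElement_eq_one_iff_commute]
      exact key
    exact (QuotientGroup.eq_one_iff _).mp h1
  refine ⟨hle.trans hSleN, ?_⟩
  ext x
  constructor
  · intro hx
    exact hle hx
  · rintro ⟨τ, hτ, rfl⟩
    open scoped commutatorElement in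
    have : (g * τ * g⁻¹) * τ⁻¹ = ⁅g, τ⁆ := by group
    rw [commutator_def, this]
    exact Subgroup.commutator_mem_commutator (Subgroup.mem_top g) (Subgroup.mem_top τ)
end

section
/- Let G be a finite group with normal abelian subgroup N such that G/N is cyclic. Then the restriction map Hom(G, ℚ/ℤ) → Hom(N, ℚ/ℤ)^{G/N} (homomorphisms invariant under the conjugation action of G/N) is surjective. -/
/-- Let `G` be a finite group with normal abelian subgroup `N` such that `G/N` is cyclic.
Then the restriction map `Hom(G, ℚ/ℤ) → Hom(N, ℚ/ℤ)^{G/N}` is surjective: every character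
of `N` with values in `ℚ/ℤ` that is invariant under conjugation by `G` extends to `G`. -/
theorem stmt1 {G : Type*} [Group G] [Finite G] (N : Subgroup G) (hN : N.Normal)
    (habelian : ∀ a b : G, a ∈ N → b ∈ N → a * b = b * a)
    (hcyc : IsCyclic (G ⧸ N))
    (χN : N →* Multiplicative (AddCircle (1 : ℚ)))
    (hinv : ∀ (g n : G) (hn : n ∈ N),
      χN ⟨g * n * g⁻¹, hN.conj_mem n hn g⟩ = χN ⟨n, hn⟩) :
    ∃ χ : G →* Multiplicative (AddCircle (1 : ℚ)),
      ∀ (n : G) (hn : n ∈ N), χ n = χN ⟨n, hn⟩ := by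
  classical
  set S : Set G := {x | ∃ (a n : G) (_ : n ∈ N), x = a * n * a⁻¹ * n⁻¹} with hS
  set K : Subgroup G := Subgroup.closure S with hKdef
  -- χN kills every element of K
  have hSsub : S ⊆ ((χN.ker.map N.subtype : Subgroup G) : Set G) := by
    rintro x ⟨a, n, hn, rfl⟩
    have h1 : a * n * a⁻¹ ∈ N := hN.conj_mem n hn a
    have h2 : a * n * a⁻¹ * n⁻¹ ∈ N := N.mul_mem h1 (N.inv_mem hn)
    refine ⟨⟨a * n * a⁻¹ * n⁻¹, h2⟩, ?_, rfl⟩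
    have hsplit : (⟨a * n * a⁻¹ * n⁻¹, h2⟩ : N) = ⟨a * n * a⁻¹, h1⟩ * (⟨n, hn⟩ : N)⁻¹ := rfl
    show χN ⟨a * n * a⁻¹ * n⁻¹, h2⟩ = 1
    rw [hsplit, map_mul, map_inv, hinv a n hn, mul_inv_cancel]
  have hKle : K ≤ χN.ker.map N.subtype := (Subgroup.closure_le _).2 hSsub
  have hKN : K ≤ N := by
    intro x hx
    obtain ⟨y, _, rfl⟩ := hKle hx
    exact y.2
  have hKker : ∀ x (hx : x ∈ K), χN ⟨x, hKN hx⟩ = 1 := by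
    intro x hx
    obtain ⟨y, hy, rfl⟩ := hKle hx
    rwa [show (⟨N.subtype y, hKN hx⟩ : N) = y from Subtype.ext rfl]
  -- K is normal
  have hKnormal : K.Normal := by
    constructor
    intro x hx g
    have hmem : (MulAut.conj g).toMonoidHom x ∈ K.map (MulAut.conj g).toMonoidHom :=
      Subgroup.mem_map_of_mem _ hx
    have hle : K.map (MulAut.conj g).toMonoidHom ≤ K := by
      rw [hKdef, MonoidHom.map_closure]
      refine (Subgroup.closure_le _).2 ?_
      rintro _ ⟨_, ⟨a, n, hn, rfl⟩, rfl⟩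
      apply Subgroup.subset_closure
      refine ⟨g * a * g⁻¹, g * n * g⁻¹, hN.conj_mem n hn g, ?_⟩
      simp only [MulEquiv.coe_toMonoidHom, MulAut.conj_apply]
      group
    exact hle hmem
  haveI := hKnormal
  -- G ⧸ K is commutative
  let φ : G ⧸ K →* G ⧸ N := QuotientGroup.map K N (MonoidHom.id G) (by simpa using hKN)
  have hker : φ.ker ≤ Subgroup.center (G ⧸ K) := by
    intro q hq
    induction q using QuotientGroup.induction_on with
    | H a =>
      have haN : a ∈ N := by
        rw [MonoidHom.mem_ker] at hq
        have : ((a : G ⧸ N) : G ⧸ N) = 1 := hq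
        exact (QuotientGroup.eq_one_iff a).1 hq
      rw [Subgroup.mem_center_iff]
      intro z
      induction z using QuotientGroup.induction_on with
      | H b =>
        show ((b * a : G) : G ⧸ K) = ((a * b : G) : G ⧸ K)
        rw [QuotientGroup.eq]
        apply Subgroup.subset_closure
        refine ⟨a⁻¹ * b⁻¹, a, haN, ?_⟩
        group
  have hcomm : ∀ p q : G ⧸ K, p * q = q * p :=
    commutative_of_cyclic_center_quotient φ hker
  letI : CommGroup (G ⧸ K) := { mul_comm := hcomm }
  -- χN factors through the image of N in G ⧸ K
  let fN : N →* G ⧸ K := (QuotientGroup.mk' K).comp N.subtype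
  have hker2 : fN.ker ≤ χN.ker := by
    intro x hx
    have hxK : (x : G) ∈ K := (QuotientGroup.eq_one_iff (x : G)).1 hx
    have := hKker _ hxK
    rwa [show (⟨(x : G), hKN hxK⟩ : N) = x from Subtype.ext rfl] at this
  let χbar : N ⧸ fN.ker →* Multiplicative (AddCircle (1 : ℚ)) :=
    QuotientGroup.lift fN.ker χN hker2
  let e : N ⧸ fN.ker ≃* fN.range := QuotientGroup.quotientKerEquivRange fN
  let c₀mul : fN.range →* Multiplicative (AddCircle (1 : ℚ)) := χbar.comp e.symm.toMonoidHom
  let c₀ : CharacterModule (Additive fN.range) := MonoidHom.toAdditiveLeft c₀mul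
  let ι : Additive fN.range →ₗ[ℤ] Additive (G ⧸ K) :=
    (MonoidHom.toAdditive fN.range.subtype).toIntLinearMap
  have hinj : Function.Injective ι := by
    intro a b h
    exact Subtype.ext_iff.2 (congrArg Additive.toMul h : _)
  obtain ⟨c, hc⟩ := CharacterModule.dual_surjective_of_injective ι hinj c₀
  refine ⟨(AddMonoidHom.toMultiplicativeRight (c : Additive (G ⧸ K) →+ AddCircle (1 : ℚ))).comp
      (QuotientGroup.mk' K), ?_⟩
  intro n hn
  have hx : (n : G ⧸ K) ∈ fN.range := ⟨⟨n, hn⟩, rfl⟩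
  have hcx : c (Additive.ofMul ((n : G) : G ⧸ K)) = c₀ (Additive.ofMul (⟨(n : G ⧸ K), hx⟩ : fN.range)) := by
    have h1 := DFunLike.congr_fun hc (Additive.ofMul (⟨(n : G ⧸ K), hx⟩ : fN.range))
    have h2 : ((CharacterModule.dual ι) c) (Additive.ofMul (⟨(n : G ⧸ K), hx⟩ : fN.range))
        = c (Additive.ofMul ((n : G) : G ⧸ K)) := rfl
    rw [h2] at h1
    exact h1
  have he : e.symm ⟨(n : G ⧸ K), hx⟩ = QuotientGroup.mk (⟨n, hn⟩ : N) := by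
    rw [MulEquiv.symm_apply_eq]
    rfl
  show Multiplicative.ofAdd (c (Additive.ofMul ((n : G) : G ⧸ K))) = χN ⟨n, hn⟩
  rw [hcx]
  show Multiplicative.ofAdd (Multiplicative.toAdd (c₀mul ⟨(n : G ⧸ K), hx⟩)) = χN ⟨n, hn⟩
  rw [ofAdd_toAdd]
  show χbar (e.symm ⟨(n : G ⧸ K), hx⟩) = χN ⟨n, hn⟩
  rw [he]
  rfl
end

section
/- Let G be a finite group, N ◁ G abelian with G/N cyclic. Define [G/N, N] := { ∏_{ρ ∈ G/N} ρ(τ_ρ)·τ_ρ⁻¹ : τ_ρ ∈ N }, the subgroup of N generated by elements ρ(τ)τ⁻¹ for ρ ∈ G/N, τ ∈ N (conjugation action). Then [G/N, N] = [G,G]. -/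
open scoped commutatorElement

/-- Let `G` be a finite group, `N ◁ G` abelian with `G/N` cyclic. The subgroup
`[G/N, N]` of `N` generated by the elements `ρ(τ)τ⁻¹ = gτg⁻¹τ⁻¹` (conjugation action of
`G/N` on `N`) equals the commutator subgroup `[G,G]`. -/
theorem stmt3 {G : Type*} [Group G] [Finite G] (N : Subgroup G) (hN : N.Normal)
    (habelian : ∀ a b : G, a ∈ N → b ∈ N → a * b = b * a)
    (hcyc : IsCyclic (G ⧸ N)) :
    Subgroup.closure {x : G | ∃ g τ : G, τ ∈ N ∧ x = (g * τ * g⁻¹) * τ⁻¹}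
      = commutator G := by
  set S : Set G := {x : G | ∃ g τ : G, τ ∈ N ∧ x = (g * τ * g⁻¹) * τ⁻¹} with hS
  set H : Subgroup G := Subgroup.closure S with hH
  -- S is closed under conjugation (up to products), so H is normal.
  have hconj : ∀ x ∈ H, ∀ h : G, h * x * h⁻¹ ∈ H := by
    intro x hx h
    induction hx using Subgroup.closure_induction with
    | one => simpa using H.one_mem
    | mul a b _ _ ha hb =>
        have : h * (a * b) * h⁻¹ = (h * a * h⁻¹) * (h * b * h⁻¹) := by group
        rw [this]; exact H.mul_mem ha hb
    | inv a _ ha =>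
        have : h * a⁻¹ * h⁻¹ = (h * a * h⁻¹)⁻¹ := by group
        rw [this]; exact H.inv_mem ha
    | mem a ha =>
        obtain ⟨g, τ, hτ, rfl⟩ := ha
        have e : h * ((g * τ * g⁻¹) * τ⁻¹) * h⁻¹
            = (((h * g) * τ * (h * g)⁻¹) * τ⁻¹) * ((h * τ * h⁻¹) * τ⁻¹)⁻¹ := by
          group
        rw [e]
        exact H.mul_mem
          (Subgroup.subset_closure ⟨h * g, τ, hτ, rfl⟩)
          (H.inv_mem (Subgroup.subset_closure ⟨h, τ, hτ, rfl⟩))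
  have hHnormal : H.Normal := ⟨fun x hx h => hconj x hx h⟩
  have hHle : H ≤ N := by
    rw [hH, Subgroup.closure_le]
    rintro x ⟨g, τ, hτ, rfl⟩
    exact N.mul_mem (hN.conj_mem τ hτ g) (N.inv_mem hτ)
  apply le_antisymm
  · rw [hH, Subgroup.closure_le]
    rintro x ⟨g, τ, hτ, rfl⟩
    have : (g * τ * g⁻¹) * τ⁻¹ = ⁅g, τ⁆ := by group
    rw [this]
    exact Subgroup.commutator_mem_commutator (Subgroup.mem_top g) (Subgroup.mem_top τ)
  · -- commutator G ≤ H : show G ⧸ H is abelian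
    haveI := hHnormal
    -- the induced map G⧸H → G⧸N
    let f : G ⧸ H →* G ⧸ N :=
      QuotientGroup.map H N (MonoidHom.id G) (by simpa using hHle)
    have hker : f.ker ≤ Subgroup.center (G ⧸ H) := by
      intro q hq
      rw [Subgroup.mem_center_iff]
      obtain ⟨a, rfl⟩ := QuotientGroup.mk_surjective q
      have haN : a ∈ N := by
        have : f (QuotientGroup.mk a) = 1 := hq
        simpa [f, QuotientGroup.map_mk, QuotientGroup.eq_one_iff] using this
      intro p
      obtain ⟨b, rfl⟩ := QuotientGroup.mk_surjective p
      have hmem : ⁅b, a⁆ ∈ H := Subgroup.subset_closure ⟨b, a, haN, by group⟩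
      have h1 : ⁅(QuotientGroup.mk b : G ⧸ H), (QuotientGroup.mk a : G ⧸ H)⁆ = 1 := by
        have := (QuotientGroup.eq_one_iff (⁅b, a⁆)).2 hmem
        simpa [commutatorElement_def] using this
      exact (commutatorElement_eq_one_iff_mul_comm.mp h1)
    have hcomm : ∀ p q : G ⧸ H, p * q = q * p :=
      commutative_of_cyclic_center_quotient f hker
    rw [commutator_def, Subgroup.commutator_le]
    intro a _ b _
    have h1 : ⁅(QuotientGroup.mk a : G ⧸ H), (QuotientGroup.mk b : G ⧸ H)⁆ = 1 :=
      commutatorElement_eq_one_iff_mul_comm.mpr (hcomm _ _)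
    have h2 : ((⁅a, b⁆ : G) : G ⧸ H) = 1 := by
      simpa [commutatorElement_def] using h1
    exact (QuotientGroup.eq_one_iff _).1 h2
end

section
/- Let k_v be a nonarchimedean local field with ring of integers O_v and residue field of size q, let L/k_v be an unramified extension, and suppose the norm form equation N_{L/k_v}(z) = 0 has a solution z₀ with coordinates in O_v whose reduction mod the maximal ideal is a smooth point of the reduced hypersurface. Then L has a degree-1 factor over k_v, i.e. L contains k_v as a direct factor when L is an étale algebra; equivalently, if L is a field, L = k_v. -/
open MvPolynomial

private lemma aux_infinite {R : Type*} [CommRing R] [IsDomain R] {x : R}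
    (hx : x ≠ 0) (hu : ¬ IsUnit x) : Infinite R := by
  refine Infinite.of_injective (fun n : ℕ => x ^ n) ?_
  intro m n h
  by_contra hmn
  wlog hlt : m < n generalizing m n
  · exact this (m := n) (n := m) h.symm (Ne.symm hmn) (by omega)
  simp only at h
  have h1 : x ^ m * x ^ (n - m) = x ^ m * 1 := by
    rw [← pow_add, mul_one, h]; congr 1; omega
  have h2 : x ^ (n - m) = 1 := mul_left_cancel₀ (pow_ne_zero m hx) h1
  have h3 : x * x ^ (n - m - 1) = 1 := by
    rw [← pow_succ', show n - m - 1 + 1 = n - m by omega]; exact h2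
  exact hu (IsUnit.of_mul_eq_one _ h3)

/-- The constant term of the partial derivative is the linear coefficient. -/
private lemma aux_eval_zero_pderiv {σ R : Type*} [DecidableEq σ] [CommRing R] (i : σ)
    (q : MvPolynomial σ R) :
    eval (0 : σ → R) (pderiv i q) = coeff (Finsupp.single i 1) q := by
  induction q using MvPolynomial.induction_on' with
  | add p q ihp ihq => simp only [map_add, coeff_add, ihp, ihq]
  | monomial m r =>
    rw [pderiv_monomial, eval_zero, constantCoeff_monomial, coeff_monomial]
    split_ifs with h1 h2 h3
    · subst h2; simp
    · have hle : m ≤ Finsupp.single i 1 := tsub_eq_zero_iff_le.mp h1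
      have hmi : m i ≤ 1 := by simpa using Finsupp.le_def.mp hle i
      have hmi0 : m i = 0 := by
        rcases Nat.lt_or_ge (m i) 1 with h | h
        · omega
        · exfalso; apply h2
          ext j
          by_cases hj : j = i
          · subst hj; simp only [Finsupp.single_eq_same]; omega
          · have h4 := Finsupp.le_def.mp hle j
            rw [Finsupp.single_apply, if_neg (fun hh : i = j => hj hh.symm)] at h4
            rw [Finsupp.single_apply, if_neg (fun hh : i = j => hj hh.symm)]
            omega
      rw [hmi0, Nat.cast_zero, mul_zero]
    · exact absurd (by simp [h3]) h1
    · rfl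

/-- The linear coefficient survives the specialization to a single variable. -/
private lemma aux_coeff_one {σ R : Type*} [DecidableEq σ] [CommRing R] (i : σ)
    (q : MvPolynomial σ R) :
    (MvPolynomial.eval₂ Polynomial.C
        (fun j => if j = i then (Polynomial.X : Polynomial R) else 0) q).coeff 1
      = coeff (Finsupp.single i 1) q := by
  induction q using MvPolynomial.induction_on' with
  | add p q ihp ihq =>
    simp only [MvPolynomial.eval₂_add, Polynomial.coeff_add, coeff_add, ihp, ihq]
  | monomial m r =>
    rw [MvPolynomial.eval₂_monomial, coeff_monomial]
    by_cases hm : m.support ⊆ {i}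
    · have hms : m = Finsupp.single i (m i) := Finsupp.support_subset_singleton.mp hm
      rw [hms, Finsupp.prod_single_index (by simp)]
      simp only [eq_self_iff_true, if_true]
      rw [Polynomial.coeff_C_mul, Polynomial.coeff_X_pow]
      by_cases h1 : m i = 1
      · simp [h1]
      · have hne : ¬ ((Finsupp.single i (m i)) = Finsupp.single i 1) :=
          fun hh => h1 (Finsupp.single_injective i hh)
        rw [if_neg (fun hh : (1 : ℕ) = m i => h1 hh.symm), mul_zero, if_neg hne]
    · obtain ⟨j, hjm, hji⟩ : ∃ j ∈ m.support, j ≠ i := by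
        by_contra hc
        push_neg at hc
        exact hm fun j hj => Finset.mem_singleton.mpr (hc j hj)
      have hprod : (m.prod fun n e =>
          (if n = i then (Polynomial.X : Polynomial R) else 0) ^ e) = 0 := by
        refine Finset.prod_eq_zero hjm ?_
        show (if j = i then (Polynomial.X : Polynomial R) else 0) ^ m j = 0
        rw [if_neg hji]
        exact zero_pow (Finsupp.mem_support_iff.mp hjm)
      rw [hprod, mul_zero, Polynomial.coeff_zero]
      rw [if_neg]
      intro hc
      apply hm
      rw [hc]
      simp [Finsupp.support_single_ne_zero]
  -- end
/-- Let `k_v` be a nonarchimedean local field with ring of integers `O` (a complete DVR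
with finite residue field) and let `L/k_v` be an unramified finite extension (the maximal
ideal of `O` generates the maximal ideal of the ring of integers of `L`). Express the norm
form `N_{L/k_v}` in an integral basis as a polynomial `N` over `O`. If the equation
`N_{L/k_v}(z) = 0` has a solution `z₀` with coordinates in `O` whose reduction modulo the
maximal ideal is a smooth point of the reduced hypersurface (some partial derivative of `N`
is a unit at `z₀`), then `L` has a degree-`1` factor over `k_v`; as `L` is a field this
means `L = k_v`, i.e. `[L : k_v] = 1`. -/
theorem stmt17 (O : Type) [CommRing O] [IsDomain O] [IsDiscreteValuationRing O]
    [IsAdicComplete (IsLocalRing.maximalIdeal O) O] [Finite (IsLocalRing.ResidueField O)]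
    (K : Type) [Field K] [Algebra O K] [IsFractionRing O K]
    (L : Type) [Field L] [Algebra K L] [FiniteDimensional K L]
    [Algebra O L] [IsScalarTower O K L]
    (hunr : ((IsLocalRing.maximalIdeal O).map
      (algebraMap O (integralClosure O L))).IsMaximal)
    (d : ℕ) (b : Module.Basis (Fin d) O (integralClosure O L))
    (N : MvPolynomial (Fin d) O)
    (hN : ∀ c : Fin d → O,
      algebraMap O K (MvPolynomial.eval c N) = Algebra.norm K (∑ i, c i • (b i : L)))
    (z₀ : Fin d → O)
    (hz : MvPolynomial.eval z₀ N = 0)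
    (hsm : ∃ i, IsLocalRing.residue O (MvPolynomial.eval z₀ (MvPolynomial.pderiv i N)) ≠ 0) :
    Module.finrank K L = 1 := by
  classical
  set n := Module.finrank K L with hn
  -- Step 1 : the solution `z₀` is identically zero.
  have hinj : Function.Injective (algebraMap O K) := IsFractionRing.injective O K
  have hx0 : (∑ i, z₀ i • ((b i : integralClosure O L) : L)) = 0 := by
    have h0 : Algebra.norm K (∑ i, z₀ i • ((b i : integralClosure O L) : L)) = 0 := by
      rw [← hN z₀, hz, map_zero]
    exact Algebra.norm_eq_zero_iff.mp h0
  have hz0 : z₀ = 0 := by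
    have hsum : (∑ i, z₀ i • (b i : integralClosure O L)) = 0 := by
      apply Subtype.coe_injective
      push_cast
      simpa using hx0
    funext i
    have := Fintype.linearIndependent_iff.mp b.linearIndependent z₀ hsum
    exact this i
  subst hz0
  -- Step 2 : extract the smoothness data
  obtain ⟨i, hi⟩ := hsm
  have ha : coeff (Finsupp.single i 1) N ≠ 0 := by
    intro hc
    apply hi
    rw [show (0 : Fin d → O) = (0 : Fin d → O) from rfl, aux_eval_zero_pderiv, hc, map_zero]
  -- Step 3 : specialize the norm form along the `i`-th coordinate axis
  set g : Fin d → Polynomial O := fun j => if j = i then Polynomial.X else 0 with hg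
  set p : Polynomial O := MvPolynomial.eval₂ Polynomial.C g N with hpdef
  have hpe : ∀ t : O, p.eval t = MvPolynomial.eval (fun j => if j = i then t else 0) N := by
    intro t
    have h := MvPolynomial.eval₂_comp_left (Polynomial.evalRingHom t) Polynomial.C g N
    have h1 : (Polynomial.evalRingHom t).comp Polynomial.C = RingHom.id O := by
      ext r; simp
    have h2 : (Polynomial.evalRingHom t) ∘ g = fun j => if j = i then t else 0 := by
      funext j
      by_cases hj : j = i <;> simp [hg, hj]
    rw [h1, h2, MvPolynomial.eval₂_id] at h
    exact h
  -- evaluate the norm form along the axis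
  have hval : ∀ t : O,
      MvPolynomial.eval (fun j => if j = i then t else 0) N
        = t ^ n * MvPolynomial.eval (fun j => if j = i then 1 else 0) N := by
    intro t
    apply hinj
    rw [map_mul, map_pow, hN, hN]
    have hsum : ∀ t : O, (∑ j, (if j = i then t else 0) • ((b j : integralClosure O L) : L))
        = t • ((b i : integralClosure O L) : L) := by
      intro t
      rw [Finset.sum_eq_single i]
      · rw [if_pos rfl]
      · intro j _ hj; rw [if_neg hj, zero_smul]
      · intro hic; exact absurd (Finset.mem_univ i) hic
    rw [hsum, hsum, one_smul]
    have hsm : t • ((b i : integralClosure O L) : L)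
        = algebraMap K L (algebraMap O K t) * ((b i : integralClosure O L) : L) := by
      rw [← Algebra.smul_def, ← IsScalarTower.algebraMap_smul K t
        ((b i : integralClosure O L) : L)]
    rw [hsm, map_mul, Algebra.norm_algebraMap, hn]
  -- Step 4 : identify `p` with `C c₀ * X ^ n` using function extensionality
  obtain ⟨π, hπ⟩ := IsDiscreteValuationRing.exists_irreducible O
  have : Infinite O := aux_infinite hπ.ne_zero hπ.not_isUnit
  set c₀ : O := MvPolynomial.eval (fun j => if j = i then 1 else 0) N with hc₀
  have hpoly : p = Polynomial.C c₀ * Polynomial.X ^ n := by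
    apply Polynomial.funext
    intro t
    rw [hpe t, hval t, Polynomial.eval_mul, Polynomial.eval_C, Polynomial.eval_pow,
      Polynomial.eval_X, mul_comm]
  -- Step 5 : compare the linear coefficients
  have hco : coeff (Finsupp.single i 1) N = (Polynomial.C c₀ * Polynomial.X ^ n).coeff 1 := by
    rw [← hpoly, hpdef, hg, aux_coeff_one]
  by_contra hne
  have hn1 : 1 < n := by
    have : 0 < n := Module.finrank_pos
    omega
  rw [Polynomial.coeff_C_mul, Polynomial.coeff_X_pow, if_neg (by omega), mul_zero] at hco
  exact ha hco
end
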